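/- Let n ≥ 2 and let M = (m_ij) be an n×n real matrix with strictly positive entries that is reciprocal, i.e. m_ji = 1/m_ij for all i, j. Define e : (ℝ₊)ⁿ → ℝ by e(x₁,…,xₙ) = Σ_{i=1}^{n} Σ_{j=1}^{n} (ln m_ij − ln(x_i/x_j))². A strictly positive vector μ ∈ (ℝ₊)ⁿ is a critical point of e (all partial derivatives of e vanish at μ) if and only if for every i it holds that (n−1) · ln μ_i = Σ_{j≠i} ln (m_ij · μ_j), equivalently μ_i^{n−1} = Π_{j≠i} (m_ij · μ_j). -/

import Mathlib

open Finset

lemma hre_term_deriv (n : ℕ) (m : Fin n → Fin n → ℝ)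
    (μ : Fin n → ℝ) (hμpos : ∀ i, 0 < μ i) (i a b : Fin n) :
    HasDerivAt
      (fun t : ℝ =>
        (Real.log (m a b) -
          Real.log (Function.update μ i t a / Function.update μ i t b)) ^ 2)
      (if a = i then
        (if b = i then 0
         else 2 * (Real.log (m a b) - Real.log (μ i / μ b)) * (-(μ i)⁻¹))
       else if b = i then 2 * (Real.log (m a b) - Real.log (μ a / μ i)) * (μ i)⁻¹
       else 0) (μ i) := by
  have hμne : ∀ j, μ j ≠ 0 := fun j => (hμpos j).ne'
  by_cases ha : a = i <;> by_cases hb : b = i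
  · subst ha; subst hb
    simp only [if_pos rfl]
    have heq : (fun t : ℝ =>
        (Real.log (m b b) -
          Real.log (Function.update μ b t b / Function.update μ b t b)) ^ 2)
        = fun _ : ℝ => (Real.log (m b b)) ^ 2 := by
      funext t
      rcases eq_or_ne t 0 with h | h
      · simp [Function.update_self, h]
      · simp [Function.update_self, div_self h]
    rw [heq]
    exact hasDerivAt_const _ _
  · subst ha
    simp only [if_pos rfl, if_neg hb, ↓reduceIte]
    simp only [Function.update_self, Function.update_of_ne hb]
    have h1 : HasDerivAt (fun t : ℝ => t / μ b) (1 / μ b) (μ a) := by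
      simpa using (hasDerivAt_id (μ a)).div_const (μ b)
    have h2 := h1.log (div_ne_zero (hμne a) (hμne b))
    have h3 := ((hasDerivAt_const (μ a) (Real.log (m a b))).fun_sub h2).fun_pow 2
    refine h3.congr_deriv (Eq.symm ?_)
    have h4 : μ a ≠ 0 := hμne a
    have h5 : μ b ≠ 0 := hμne b
    field_simp
    ring
  · subst hb
    simp only [if_neg ha, if_pos rfl, ↓reduceIte]
    simp only [Function.update_self, Function.update_of_ne ha]
    have h1 : HasDerivAt (fun t : ℝ => μ a / t) (μ a * (-(μ b ^ 2)⁻¹)) (μ b) := by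
      simpa [div_eq_mul_inv] using (hasDerivAt_inv (hμne b)).const_mul (μ a)
    have h2 := h1.log (div_ne_zero (hμne a) (hμne b))
    have h3 := ((hasDerivAt_const (μ b) (Real.log (m a b))).fun_sub h2).fun_pow 2
    refine h3.congr_deriv (Eq.symm ?_)
    have h4 : μ a ≠ 0 := hμne a
    have h5 : μ b ≠ 0 := hμne b
    field_simp
    ring
  · simp only [if_neg ha, if_neg hb]
    simp only [Function.update_of_ne ha, Function.update_of_ne hb]
    exact hasDerivAt_const _ _

lemma hre_key_deriv (n : ℕ) (hn : 2 ≤ n) (m : Fin n → Fin n → ℝ)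
    (hmpos : ∀ i j, 0 < m i j)
    (hrec : ∀ i j, m j i = 1 / m i j)
    (μ : Fin n → ℝ) (hμpos : ∀ i, 0 < μ i) (i : Fin n) :
    HasDerivAt
      (fun t : ℝ =>
        ∑ a, ∑ b,
          (Real.log (m a b) -
            Real.log (Function.update μ i t a / Function.update μ i t b)) ^ 2)
      ((-4 / μ i) *
        ((∑ j ∈ Finset.univ.erase i, Real.log (m i j * μ j)) -
          ((n : ℝ) - 1) * Real.log (μ i))) (μ i) := by
  have hμne : ∀ j, μ j ≠ 0 := fun j => (hμpos j).ne'
  set d : Fin n → Fin n → ℝ := fun a b =>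
    if a = i then
      (if b = i then 0
       else 2 * (Real.log (m a b) - Real.log (μ i / μ b)) * (-(μ i)⁻¹))
    else if b = i then 2 * (Real.log (m a b) - Real.log (μ a / μ i)) * (μ i)⁻¹
    else 0 with hd
  have H : HasDerivAt
      (fun t : ℝ =>
        ∑ a, ∑ b,
          (Real.log (m a b) -
            Real.log (Function.update μ i t a / Function.update μ i t b)) ^ 2)
      (∑ a, ∑ b, d a b) (μ i) :=
    HasDerivAt.fun_sum fun a _ =>
      HasDerivAt.fun_sum fun b _ => hre_term_deriv n m μ hμpos i a b
  convert H using 1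
  -- compute the sum
  have h1 : ∀ a : Fin n, a ≠ i → (∑ b, d a b) = d a i :=
    fun a ha => Finset.sum_eq_single_of_mem i (mem_univ i)
      (fun b _ hb => by simp [hd, ha, hb])
  have h2 : (∑ b, d i b) = ∑ b ∈ Finset.univ.erase i, d i b := by
    rw [← Finset.add_sum_erase _ _ (mem_univ i)]
    simp [hd]
  have h3 : (∑ a, ∑ b, d a b)
      = ∑ j ∈ Finset.univ.erase i, (d i j + d j i) := by
    rw [← Finset.add_sum_erase _ (fun a => ∑ b, d a b) (mem_univ i), h2,
      Finset.sum_congr rfl (fun a ha => h1 a (Finset.ne_of_mem_erase ha)),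
      ← Finset.sum_add_distrib]
  have h4 : ∀ j ∈ Finset.univ.erase i,
      d i j + d j i
        = (-4 / μ i) * (Real.log (m i j * μ j) - Real.log (μ i)) := by
    intro j hj
    have hj' : j ≠ i := Finset.ne_of_mem_erase hj
    have e1 : Real.log (m j i) = -Real.log (m i j) := by
      rw [hrec, Real.log_div one_ne_zero (hmpos i j).ne', Real.log_one]; ring
    simp only [hd, if_neg hj', if_pos rfl, ↓reduceIte]
    rw [Real.log_div (hμne i) (hμne j), Real.log_div (hμne j) (hμne i),
      Real.log_mul (hmpos i j).ne' (hμne j), e1]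
    field_simp
    ring
  rw [h3, Finset.sum_congr rfl h4, ← Finset.mul_sum, Finset.sum_sub_distrib,
    Finset.sum_const, Finset.card_erase_of_mem (mem_univ i), Finset.card_univ,
    Fintype.card_fin, nsmul_eq_mul]
  have : ((n - 1 : ℕ) : ℝ) = (n : ℝ) - 1 := by
    have : 1 ≤ n := le_trans one_le_two hn
    push_cast [this]
    ring
  rw [this]



/-- For a reciprocal positive `n × n` matrix `M` (`n ≥ 2`), a strictly positive
vector `μ` is a critical point of the multiplicative error function `e` (all partial
derivatives vanish at `μ`) if and only if for every `i` it holds that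
`(n-1) * ln (μ i) = ∑_{j ≠ i} ln (m i j * μ j)`, equivalently
`μ i ^ (n-1) = ∏_{j ≠ i} (m i j * μ j)`. -/
theorem hre_geometric_critical_point_iff
    (n : ℕ) (hn : 2 ≤ n)
    (m : Fin n → Fin n → ℝ)
    (hmpos : ∀ i j, 0 < m i j)
    (hrec : ∀ i j, m j i = 1 / m i j)
    (μ : Fin n → ℝ) (hμpos : ∀ i, 0 < μ i) :
    (∀ i : Fin n,
        HasDerivAt
          (fun t : ℝ =>
            ∑ a, ∑ b,
              (Real.log (m a b) -
                Real.log (Function.update μ i t a / Function.update μ i t b)) ^ 2)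
          0 (μ i)) ↔
      ((∀ i : Fin n,
          ((n : ℝ) - 1) * Real.log (μ i) =
            ∑ j ∈ Finset.univ.erase i, Real.log (m i j * μ j)) ∧
        ∀ i : Fin n, μ i ^ (n - 1) = ∏ j ∈ Finset.univ.erase i, (m i j * μ j)) := by
  have hμne : ∀ j, μ j ≠ 0 := fun j => (hμpos j).ne'
  have key := hre_key_deriv n hn m hmpos hrec μ hμpos
  constructor
  · intro h
    have hlog : ∀ i : Fin n,
        ((n : ℝ) - 1) * Real.log (μ i) =
          ∑ j ∈ Finset.univ.erase i, Real.log (m i j * μ j) := by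
      intro i
      have h0 : (-4 / μ i) *
          ((∑ j ∈ Finset.univ.erase i, Real.log (m i j * μ j)) -
            ((n : ℝ) - 1) * Real.log (μ i)) = 0 := (key i).unique (h i)
      have h4 : (-4 / μ i) ≠ 0 := by
        apply div_ne_zero (by norm_num) (hμne i)
      have := (mul_eq_zero.mp h0).resolve_left h4
      linarith
    refine ⟨hlog, fun i => ?_⟩
    have hexp := congrArg Real.exp (hlog i)
    have hc : ((n - 1 : ℕ) : ℝ) = (n : ℝ) - 1 := by
      have : 1 ≤ n := le_trans one_le_two hn
      push_cast [this]; ring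
    rw [← hc, Real.exp_sum] at hexp
    calc μ i ^ (n - 1) = Real.exp (Real.log (μ i)) ^ (n - 1) := by
          rw [Real.exp_log (hμpos i)]
      _ = Real.exp (((n - 1 : ℕ) : ℝ) * Real.log (μ i)) := by
          rw [← Real.exp_nat_mul]
      _ = ∏ j ∈ Finset.univ.erase i, Real.exp (Real.log (m i j * μ j)) := hexp
      _ = ∏ j ∈ Finset.univ.erase i, (m i j * μ j) :=
          Finset.prod_congr rfl fun j _ => Real.exp_log (mul_pos (hmpos i j) (hμpos j))
  · rintro ⟨h1, -⟩ i
    have h0 : (-4 / μ i) *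
        ((∑ j ∈ Finset.univ.erase i, Real.log (m i j * μ j)) -
          ((n : ℝ) - 1) * Real.log (μ i)) = 0 := by
      rw [← h1 i]; ring
    rw [← h0]
    exact key i
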